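/- arXiv:2402.12987 — 3 statements merged into one kernel-verified Lean document; each statement's English description precedes it below -/
import Mathlib

section
/- Let d ≥ 1 and let μ₁, μ₂ ∈ ℝ^d with μ₁ ≠ μ₂. Let p_in, p_out be positive real numbers, and let n₁, n₂, m₁, m₂ be positive natural numbers (n₁ = C₁(V₁) and n₂ = C₂(V₁) are the numbers of community-1 and community-2 vertices in the first vertex batch, and m₁ = C₁(V₂), m₂ = C₂(V₂) those in the second batch). Define the expected mean-aggregated input of a community-1 vertex before and after the second batch arrives as E₁ = (n₁·p_in·μ₁ + n₂·p_out·μ₂)/(n₁·p_in + n₂·p_out) and E₂ = ((n₁+m₁)·p_in·μ₁ + (n₂+m₂)·p_out·μ₂)/((n₁+m₁)·p_in + (n₂+m₂)·p_out). If n₁·m₂ ≠ n₂·m₁ (i.e., C₁(V₁)/C₂(V₁) ≠ C₁(V₂)/C₂(V₂)), then E₁ ≠ E₂. -/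
/-- Proposition 1 (Imbalanced Observation): in the two-community CSBM, if the
community ratios of the two vertex batches differ (`n₁·m₂ ≠ n₂·m₁`), then the
expected mean-aggregated input of a community-1 vertex changes after the second
batch arrives. -/
theorem imbalanced_observation
    {d : ℕ} (hd : 1 ≤ d) (μ₁ μ₂ : EuclideanSpace ℝ (Fin d)) (hμ : μ₁ ≠ μ₂)
    (p_in p_out : ℝ) (hpin : 0 < p_in) (hpout : 0 < p_out)
    (n₁ n₂ m₁ m₂ : ℕ) (hn₁ : 0 < n₁) (hn₂ : 0 < n₂) (hm₁ : 0 < m₁) (hm₂ : 0 < m₂)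
    (E₁ E₂ : EuclideanSpace ℝ (Fin d))
    (hE₁ : E₁ = ((n₁ : ℝ) * p_in + (n₂ : ℝ) * p_out)⁻¹ •
      (((n₁ : ℝ) * p_in) • μ₁ + ((n₂ : ℝ) * p_out) • μ₂))
    (hE₂ : E₂ = (((n₁ : ℝ) + m₁) * p_in + ((n₂ : ℝ) + m₂) * p_out)⁻¹ •
      ((((n₁ : ℝ) + m₁) * p_in) • μ₁ + (((n₂ : ℝ) + m₂) * p_out) • μ₂))
    (hratio : n₁ * m₂ ≠ n₂ * m₁) :
    E₁ ≠ E₂ := by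
  set a : ℝ := (n₁ : ℝ) * p_in with ha
  set b : ℝ := (n₂ : ℝ) * p_out with hb
  set a' : ℝ := ((n₁ : ℝ) + m₁) * p_in with ha'
  set b' : ℝ := ((n₂ : ℝ) + m₂) * p_out with hb'
  have hn₁' : (0 : ℝ) < n₁ := by exact_mod_cast hn₁
  have hn₂' : (0 : ℝ) < n₂ := by exact_mod_cast hn₂
  have hm₁' : (0 : ℝ) < m₁ := by exact_mod_cast hm₁
  have hm₂' : (0 : ℝ) < m₂ := by exact_mod_cast hm₂
  have hS₁ : (0 : ℝ) < a + b := by positivity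
  have hS₂ : (0 : ℝ) < a' + b' := by positivity
  intro h
  rw [hE₁, hE₂] at h
  have h2 : ((a + b) * (a' + b')) • ((a + b)⁻¹ • (a • μ₁ + b • μ₂)) =
      ((a + b) * (a' + b')) • ((a' + b')⁻¹ • (a' • μ₁ + b' • μ₂)) := by rw [h]
  rw [smul_smul, smul_smul] at h2
  have e1 : (a + b) * (a' + b') * (a + b)⁻¹ = a' + b' := by
    field_simp
  have e2 : (a + b) * (a' + b') * (a' + b')⁻¹ = a + b := by
    field_simp
  rw [e1, e2, smul_add, smul_add, smul_smul, smul_smul, smul_smul, smul_smul] at h2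
  have key : (a * b' - a' * b) • μ₁ = (a * b' - a' * b) • μ₂ := by
    have := h2
    rw [sub_smul, sub_smul]
    have hr : ((a' + b') * a) • μ₁ - ((a + b) * a') • μ₁ =
        ((a + b) * b') • μ₂ - ((a' + b') * b) • μ₂ := by
      rw [sub_eq_sub_iff_add_eq_add]
      linear_combination (norm := module) this
    calc (a * b') • μ₁ - (a' * b) • μ₁
        = ((a' + b') * a) • μ₁ - ((a + b) * a') • μ₁ := by
          rw [← sub_smul, ← sub_smul]; ring_nf
      _ = ((a + b) * b') • μ₂ - ((a' + b') * b) • μ₂ := hr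
      _ = (a * b') • μ₂ - (a' * b) • μ₂ := by
          rw [← sub_smul, ← sub_smul]; ring_nf
  have hc : a * b' - a' * b ≠ 0 := by
    have hrr : (n₁ : ℝ) * m₂ ≠ (n₂ : ℝ) * m₁ := by exact_mod_cast hratio
    have : a * b' - a' * b = p_in * p_out * ((n₁ : ℝ) * m₂ - (n₂ : ℝ) * m₁) := by
      rw [ha, hb, ha', hb']; ring
    rw [this]
    exact mul_ne_zero (by positivity) (sub_ne_zero.mpr hrr)
  exact hμ (smul_right_injective _ hc key)
end

section
/- Let Z be a measurable space and let μ₁, μ₂, μ₃ be probability measures on Z × ℝ with Z-marginals ν₁, ν₂, ν₃. For a measurable h : Z → ℝ define the risk R_{μ}(h) := ∫ |h(z) − y| dμ(z,y). Let H be a nonempty set of measurable functions Z → ℝ, let F be a set of measurable functions Z → ℝ that is closed under negation and contains z ↦ |h(z) − h'(z)| for all h, h' ∈ H, and define d_F(ν, ν') := sup_{f ∈ F} (∫ f dν − ∫ f dν'). Assume all risks R_{μᵢ}(h) for h ∈ H are finite, all relevant integrands are integrable, the suprema defining d_F(ν₁,ν₂) and d_F(ν₁,ν₃) are finite, and there exists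 h₂* ∈ H attaining min_{h∈H} R_{μ₂}(h). Set λ := inf_{h ∈ H} (R_{μ₂}(h) + R_{μ₃}(h)). Then for every h ∈ H, R_{μ₂}(h) ≤ R_{μ₃}(h) + 2·d_F(ν₁, ν₂) + d_F(ν₁, ν₃) + λ. -/
open MeasureTheory

/-- Generalization risk with absolute loss: `R_μ(h) = ∫ |h(z) - y| dμ(z,y)`. -/
noncomputable def risk {Z : Type*} [MeasurableSpace Z]
    (μ : Measure (Z × ℝ)) (h : Z → ℝ) : ℝ :=
  ∫ p, |h p.1 - p.2| ∂μ

/-- Discrepancy over a function class `F`: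
`d_F(ν, ν') = sup_{f ∈ F} (∫ f dν - ∫ f dν')`. -/
noncomputable def discrepancy {Z : Type*} [MeasurableSpace Z]
    (F : Set (Z → ℝ)) (ν ν' : Measure Z) : ℝ :=
  sSup ((fun f => (∫ z, f z ∂ν) - ∫ z, f z ∂ν') '' F)

/-- Theorem 1 (CFR Bound) for the NGIL-2 problem with absolute loss: the
catastrophic forgetting risk `R_{μ₂}(h)` is bounded by the risk on the new task
plus the structural-shift discrepancies and the joint optimal risk `λ`. -/
theorem cfr_bound
    {Z : Type*} [MeasurableSpace Z]
    (μ₁ μ₂ μ₃ : Measure (Z × ℝ))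
    [IsProbabilityMeasure μ₁] [IsProbabilityMeasure μ₂] [IsProbabilityMeasure μ₃]
    (ν₁ ν₂ ν₃ : Measure Z)
    (hν₁ : ν₁ = μ₁.map Prod.fst) (hν₂ : ν₂ = μ₂.map Prod.fst)
    (hν₃ : ν₃ = μ₃.map Prod.fst)
    (H : Set (Z → ℝ)) (hH : H.Nonempty)
    (hHmeas : ∀ h ∈ H, Measurable h)
    (F : Set (Z → ℝ)) (hFmeas : ∀ f ∈ F, Measurable f)
    (hFneg : ∀ f ∈ F, (fun z => -(f z)) ∈ F)
    (hFpair : ∀ h ∈ H, ∀ h' ∈ H, (fun z => |h z - h' z|) ∈ F)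
    (hint₁ : ∀ h ∈ H, Integrable (fun p : Z × ℝ => |h p.1 - p.2|) μ₁)
    (hint₂ : ∀ h ∈ H, Integrable (fun p : Z × ℝ => |h p.1 - p.2|) μ₂)
    (hint₃ : ∀ h ∈ H, Integrable (fun p : Z × ℝ => |h p.1 - p.2|) μ₃)
    (hpint₁ : ∀ h ∈ H, ∀ h' ∈ H, Integrable (fun z => |h z - h' z|) ν₁)
    (hpint₂ : ∀ h ∈ H, ∀ h' ∈ H, Integrable (fun z => |h z - h' z|) ν₂)
    (hpint₃ : ∀ h ∈ H, ∀ h' ∈ H, Integrable (fun z => |h z - h' z|) ν₃)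
    (hbdd₁₂ : BddAbove ((fun f => (∫ z, f z ∂ν₁) - ∫ z, f z ∂ν₂) '' F))
    (hbdd₁₃ : BddAbove ((fun f => (∫ z, f z ∂ν₁) - ∫ z, f z ∂ν₃) '' F))
    (h₂star : Z → ℝ) (h₂star_mem : h₂star ∈ H)
    (h₂star_min : ∀ h ∈ H, risk μ₂ h₂star ≤ risk μ₂ h)
    (lam : ℝ) (hlam : lam = sInf ((fun h => risk μ₂ h + risk μ₃ h) '' H)) :
    ∀ h ∈ H, risk μ₂ h ≤ risk μ₃ h +
      2 * discrepancy F ν₁ ν₂ + discrepancy F ν₁ ν₃ + lam := by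
  intro h hmem
  -- d12 is nonnegative since F contains the zero-like function |h - h|
  have d12nonneg : 0 ≤ discrepancy F ν₁ ν₂ := by
    have hf0 : (fun z => |h z - h z|) ∈ F := hFpair h hmem h hmem
    have : (0 : ℝ) ∈ ((fun f => (∫ z, f z ∂ν₁) - ∫ z, f z ∂ν₂) '' F) := by
      refine ⟨_, hf0, ?_⟩
      simp
    exact le_csSup hbdd₁₂ this
  have key : ∀ h' ∈ H, risk μ₂ h ≤ risk μ₃ h + discrepancy F ν₁ ν₂ +
      discrepancy F ν₁ ν₃ + (risk μ₂ h' + risk μ₃ h') := by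
    intro h' hmem'
    set f : Z → ℝ := fun z => |h z - h' z| with hf
    have hfF : f ∈ F := hFpair h hmem h' hmem'
    have hfmeas : Measurable f := ((hHmeas h hmem).sub (hHmeas h' hmem')).abs
    -- Step 1: R₂(h) ≤ R₂(h') + ∫ f dν₂
    have hintf2 : Integrable (fun p : Z × ℝ => f p.1) μ₂ := by
      have := hpint₂ h hmem h' hmem'
      rw [hν₂] at this
      exact (integrable_map_measure hfmeas.aestronglyMeasurable
        measurable_fst.aemeasurable).mp this
    have step1 : risk μ₂ h ≤ risk μ₂ h' + ∫ z, f z ∂ν₂ := by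
      have hmono : risk μ₂ h ≤ ∫ p : Z × ℝ, (|h' p.1 - p.2| + f p.1) ∂μ₂ := by
        refine integral_mono (hint₂ h hmem) ((hint₂ h' hmem').add hintf2) ?_
        intro p
        have heq : h p.1 - p.2 = (h' p.1 - p.2) + (h p.1 - h' p.1) := by ring
        simp only [hf]
        rw [heq]
        exact abs_add_le _ _
      rw [integral_add (hint₂ h' hmem') hintf2] at hmono
      have hmap : ∫ z, f z ∂ν₂ = ∫ p : Z × ℝ, f p.1 ∂μ₂ := by
        rw [hν₂]
        exact integral_map measurable_fst.aemeasurable hfmeas.aestronglyMeasurable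
      rw [hmap]
      exact hmono
    -- Step 2: ∫ f dν₂ ≤ ∫ f dν₁ + d12
    have step2 : ∫ z, f z ∂ν₂ ≤ ∫ z, f z ∂ν₁ + discrepancy F ν₁ ν₂ := by
      have hnegF : (fun z => -(f z)) ∈ F := hFneg f hfF
      have hmemim : ((∫ z, -(f z) ∂ν₁) - ∫ z, -(f z) ∂ν₂) ∈
          ((fun g => (∫ z, g z ∂ν₁) - ∫ z, g z ∂ν₂) '' F) := ⟨_, hnegF, rfl⟩
      have := le_csSup hbdd₁₂ hmemim
      rw [integral_neg, integral_neg] at this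
      have : (∫ z, f z ∂ν₂) - ∫ z, f z ∂ν₁ ≤ discrepancy F ν₁ ν₂ := by
        unfold discrepancy; linarith
      linarith
    -- Step 3: ∫ f dν₁ ≤ ∫ f dν₃ + d13
    have step3 : ∫ z, f z ∂ν₁ ≤ ∫ z, f z ∂ν₃ + discrepancy F ν₁ ν₃ := by
      have hmemim : ((∫ z, f z ∂ν₁) - ∫ z, f z ∂ν₃) ∈
          ((fun g => (∫ z, g z ∂ν₁) - ∫ z, g z ∂ν₃) '' F) := ⟨_, hfF, rfl⟩
      have := le_csSup hbdd₁₃ hmemim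
      unfold discrepancy; linarith
    -- Step 4: ∫ f dν₃ ≤ R₃(h) + R₃(h')
    have step4 : ∫ z, f z ∂ν₃ ≤ risk μ₃ h + risk μ₃ h' := by
      have hmap : ∫ z, f z ∂ν₃ = ∫ p : Z × ℝ, f p.1 ∂μ₃ := by
        rw [hν₃]
        exact integral_map measurable_fst.aemeasurable hfmeas.aestronglyMeasurable
      rw [hmap]
      have hintf3 : Integrable (fun p : Z × ℝ => f p.1) μ₃ := by
        have := hpint₃ h hmem h' hmem'
        rw [hν₃] at this
        exact (integrable_map_measure hfmeas.aestronglyMeasurable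
          measurable_fst.aemeasurable).mp this
      have hmono : ∫ p : Z × ℝ, f p.1 ∂μ₃ ≤
          ∫ p : Z × ℝ, (|h p.1 - p.2| + |h' p.1 - p.2|) ∂μ₃ := by
        refine integral_mono hintf3 ((hint₃ h hmem).add (hint₃ h' hmem')) ?_
        intro p
        have : h p.1 - h' p.1 = (h p.1 - p.2) - (h' p.1 - p.2) := by ring
        simp only [hf, this]
        exact abs_sub _ _
      rw [integral_add (hint₃ h hmem) (hint₃ h' hmem')] at hmono
      exact hmono
    -- Step 5: R₂(h') ≤ R₂(h') (trivially); combine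
    linarith
  -- pass to the infimum
  have hne : ((fun h => risk μ₂ h + risk μ₃ h) '' H).Nonempty := hH.image _
  have hlamge : risk μ₂ h - (risk μ₃ h + discrepancy F ν₁ ν₂ + discrepancy F ν₁ ν₃)
      ≤ lam := by
    rw [hlam]
    refine le_csInf hne ?_
    rintro b ⟨h', hmem', rfl⟩
    simp only
    linarith [key h' hmem']
  linarith
end

section
/- Let Z be a measurable space and let μ₁, μ₂, μ₃ be probability measures on Z × ℝ with Z-marginals ν₁, ν₂, ν₃. For a measurable h : Z → ℝ define R_{μ}(h) := ∫ |h(z) − y| dμ(z,y), and for h, h' define R_{ν}(h,h') := ∫ |h(z) − h'(z)| dν(z). Let H be a set of measurable functions Z → ℝ, let F be a set of measurable functions Z → ℝ that is closed under negation and contains z ↦ |h(z) − h'(z)| for all h, h' ∈ H, and define d_F(ν, ν') := sup_{f ∈ F} (∫ f dν − ∫ f dν'). Assume all risks are finite, all relevant integrands are integrable, and the suprema defining d_F(ν₁,ν₂) and d_F(ν₂,ν₃) are finite. Suppose h* ∈ H attains min_{h∈H} (R_{μ₂}(h) + R_{μ₃}(h)) and set λ := R_{μ₂}(h*) + R_{μ₃}(h*).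 Then for every h ∈ H, R_{μ₂}(h) ≤ R_{μ₃}(h) + 2·d_F(ν₁, ν₂) + d_F(ν₂, ν₃) + λ. -/
open MeasureTheory

/-- Pair risk with absolute loss over the input marginal:
`R_ν(h, h') = ∫ |h(z) - h'(z)| dν(z)`. -/
noncomputable def pairRisk {Z : Type*} [MeasurableSpace Z]
    (ν : Measure Z) (h h' : Z → ℝ) : ℝ :=
  ∫ z, |h z - h' z| ∂ν

/-- The inequality established in the appendix proof of Theorem 1 (CFR Bound):
for `h* ∈ H` minimizing `R_{μ₂} + R_{μ₃}` and `λ = R_{μ₂}(h*) + R_{μ₃}(h*)`,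
every `h ∈ H` satisfies
`R_{μ₂}(h) ≤ R_{μ₃}(h) + 2·d_F(ν₁,ν₂) + d_F(ν₂,ν₃) + λ`. -/
theorem cfr_bound_proof_inequality
    {Z : Type*} [MeasurableSpace Z]
    (μ₁ μ₂ μ₃ : Measure (Z × ℝ))
    [IsProbabilityMeasure μ₁] [IsProbabilityMeasure μ₂] [IsProbabilityMeasure μ₃]
    (ν₁ ν₂ ν₃ : Measure Z)
    (hν₁ : ν₁ = μ₁.map Prod.fst) (hν₂ : ν₂ = μ₂.map Prod.fst)
    (hν₃ : ν₃ = μ₃.map Prod.fst)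
    (H : Set (Z → ℝ))
    (hHmeas : ∀ h ∈ H, Measurable h)
    (F : Set (Z → ℝ)) (hFmeas : ∀ f ∈ F, Measurable f)
    (hFneg : ∀ f ∈ F, (fun z => -(f z)) ∈ F)
    (hFpair : ∀ h ∈ H, ∀ h' ∈ H, (fun z => |h z - h' z|) ∈ F)
    (hint₁ : ∀ h ∈ H, Integrable (fun p : Z × ℝ => |h p.1 - p.2|) μ₁)
    (hint₂ : ∀ h ∈ H, Integrable (fun p : Z × ℝ => |h p.1 - p.2|) μ₂)
    (hint₃ : ∀ h ∈ H, Integrable (fun p : Z × ℝ => |h p.1 - p.2|) μ₃)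
    (hpint₁ : ∀ h ∈ H, ∀ h' ∈ H, Integrable (fun z => |h z - h' z|) ν₁)
    (hpint₂ : ∀ h ∈ H, ∀ h' ∈ H, Integrable (fun z => |h z - h' z|) ν₂)
    (hpint₃ : ∀ h ∈ H, ∀ h' ∈ H, Integrable (fun z => |h z - h' z|) ν₃)
    (hbdd₁₂ : BddAbove ((fun f => (∫ z, f z ∂ν₁) - ∫ z, f z ∂ν₂) '' F))
    (hbdd₂₃ : BddAbove ((fun f => (∫ z, f z ∂ν₂) - ∫ z, f z ∂ν₃) '' F))
    (hstar : Z → ℝ) (hstar_mem : hstar ∈ H)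
    (hstar_min : ∀ h ∈ H, risk μ₂ hstar + risk μ₃ hstar ≤ risk μ₂ h + risk μ₃ h)
    (lam : ℝ) (hlam : lam = risk μ₂ hstar + risk μ₃ hstar) :
    ∀ h ∈ H, risk μ₂ h ≤ risk μ₃ h +
      2 * discrepancy F ν₁ ν₂ + discrepancy F ν₂ ν₃ + lam := by
  intro h hmem
  -- the pair function
  set f : Z → ℝ := fun z => |h z - hstar z| with hf
  have hfF : f ∈ F := hFpair h hmem hstar hstar_mem
  have hfmeas : Measurable f := hFmeas f hfF
  have hfsm : StronglyMeasurable f := hfmeas.stronglyMeasurable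
  -- transfer integrals over marginals
  have key : ∀ (μ : Measure (Z × ℝ)), ∫ z, f z ∂(μ.map Prod.fst)
      = ∫ p, f p.1 ∂μ := fun μ =>
    integral_map measurable_fst.aemeasurable hfsm.aestronglyMeasurable
  have hfint₂ : Integrable (fun p : Z × ℝ => f p.1) μ₂ := by
    have := hpint₂ h hmem hstar hstar_mem
    rw [hν₂] at this
    exact (integrable_map_measure hfsm.aestronglyMeasurable
      measurable_fst.aemeasurable).mp this
  have hfint₃ : Integrable (fun p : Z × ℝ => f p.1) μ₃ := by
    have := hpint₃ h hmem hstar hstar_mem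
    rw [hν₃] at this
    exact (integrable_map_measure hfsm.aestronglyMeasurable
      measurable_fst.aemeasurable).mp this
  -- step 1 : risk μ₂ h ≤ risk μ₂ hstar + pairRisk ν₂ h hstar
  have step1 : risk μ₂ h ≤ risk μ₂ hstar + pairRisk ν₂ h hstar := by
    have hmono : ∀ p : Z × ℝ, |h p.1 - p.2| ≤ |hstar p.1 - p.2| + f p.1 := by
      intro p
      have : h p.1 - p.2 = (hstar p.1 - p.2) + (h p.1 - hstar p.1) := by ring
      rw [this]
      calc |(hstar p.1 - p.2) + (h p.1 - hstar p.1)|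
          ≤ |hstar p.1 - p.2| + |h p.1 - hstar p.1| := abs_add_le _ _
        _ = |hstar p.1 - p.2| + f p.1 := rfl
    calc risk μ₂ h ≤ ∫ p, (|hstar p.1 - p.2| + f p.1) ∂μ₂ :=
          integral_mono (hint₂ h hmem) ((hint₂ hstar hstar_mem).add hfint₂) hmono
      _ = risk μ₂ hstar + ∫ p, f p.1 ∂μ₂ :=
          integral_add (hint₂ hstar hstar_mem) hfint₂
      _ = risk μ₂ hstar + pairRisk ν₂ h hstar := by
          rw [pairRisk, hν₂, key]
  -- step 2 : pairRisk ν₂ ≤ pairRisk ν₃ + discrepancy F ν₂ ν₃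
  have step2 : pairRisk ν₂ h hstar ≤ pairRisk ν₃ h hstar + discrepancy F ν₂ ν₃ := by
    have hle : (∫ z, f z ∂ν₂) - ∫ z, f z ∂ν₃ ≤ discrepancy F ν₂ ν₃ :=
      le_csSup hbdd₂₃ ⟨f, hfF, rfl⟩
    have : pairRisk ν₂ h hstar = ∫ z, f z ∂ν₂ := rfl
    have h3 : pairRisk ν₃ h hstar = ∫ z, f z ∂ν₃ := rfl
    linarith
  -- step 3 : pairRisk ν₃ h hstar ≤ risk μ₃ h + risk μ₃ hstar
  have step3 : pairRisk ν₃ h hstar ≤ risk μ₃ h + risk μ₃ hstar := by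
    have hmono : ∀ p : Z × ℝ, f p.1 ≤ |h p.1 - p.2| + |hstar p.1 - p.2| := by
      intro p
      have : h p.1 - hstar p.1 = (h p.1 - p.2) - (hstar p.1 - p.2) := by ring
      calc f p.1 = |(h p.1 - p.2) - (hstar p.1 - p.2)| := by
            show |h p.1 - hstar p.1| = _; rw [this]
        _ ≤ |h p.1 - p.2| + |hstar p.1 - p.2| := abs_sub _ _
    calc pairRisk ν₃ h hstar = ∫ p, f p.1 ∂μ₃ := by rw [pairRisk, hν₃, key]
      _ ≤ ∫ p, (|h p.1 - p.2| + |hstar p.1 - p.2|) ∂μ₃ :=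
          integral_mono hfint₃ ((hint₃ h hmem).add (hint₃ hstar hstar_mem)) hmono
      _ = risk μ₃ h + risk μ₃ hstar :=
          integral_add (hint₃ h hmem) (hint₃ hstar hstar_mem)
  -- discrepancy F ν₁ ν₂ ≥ 0
  have dnonneg : 0 ≤ discrepancy F ν₁ ν₂ := by
    set a : ℝ := (∫ z, f z ∂ν₁) - ∫ z, f z ∂ν₂ with ha
    have h1 : a ≤ discrepancy F ν₁ ν₂ := le_csSup hbdd₁₂ ⟨f, hfF, rfl⟩
    have h2 : -a ≤ discrepancy F ν₁ ν₂ := by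
      have hmem' : (fun z => -(f z)) ∈ F := hFneg f hfF
      have : (∫ z, -(f z) ∂ν₁) - ∫ z, -(f z) ∂ν₂ = -a := by
        rw [integral_neg, integral_neg]; ring
      have := le_csSup hbdd₁₂ (⟨fun z => -(f z), hmem', this⟩ :
        -a ∈ (fun g => (∫ z, g z ∂ν₁) - ∫ z, g z ∂ν₂) '' F)
      exact this
    rcases le_total 0 a with h' | h'
    · linarith
    · linarith
  linarith [step1, step2, step3, hlam]
end
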